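/- arXiv:1603.04350 — 2 statements merged into one kernel-verified Lean document; each statement's English description precedes it below -/
import Mathlib

section
/- Let f : C → R^d be an affine map on a convex set C ⊆ R^d with ‖f(x) − x‖ ≤ d for all x ∈ C. If the ball B of radius R > d centered at a point p is contained in C, then p ∈ f(B). -/
open RealInnerProductSpace


theorem affine_near_identity_image_contains_center (d : ℕ)
    (C : Set (EuclideanSpace ℝ (Fin d))) (hC : Convex ℝ C)
    (f : EuclideanSpace ℝ (Fin d) →ᵃ[ℝ] EuclideanSpace ℝ (Fin d))
    (hf : ∀ x ∈ C, ‖f x - x‖ ≤ (d : ℝ))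
    (p : EuclideanSpace ℝ (Fin d)) (R : ℝ) (hd : 0 < d) (hR : (d : ℝ) < R)
    (hB : Metric.closedBall p R ⊆ C) :
    p ∈ f '' Metric.closedBall p R := by
  by_contra hp
  have hdR : (0:ℝ) < R := lt_of_le_of_lt (Nat.cast_nonneg d) hR
  have hcont : Continuous f := f.continuous_of_finiteDimensional
  have hcomp : IsCompact (f '' Metric.closedBall p R) :=
    (isCompact_closedBall p R).image hcont
  have hconv : Convex ℝ (f '' Metric.closedBall p R) :=
    (convex_closedBall p R).affine_image f
  obtain ⟨φ, u, h1, h2⟩ := geometric_hahn_banach_closed_point hconv hcomp.isClosed hp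
  set v := (InnerProductSpace.toDual ℝ (EuclideanSpace ℝ (Fin d))).symm φ with hv
  have hvx : ∀ x, ⟪v, x⟫ = φ x := fun x => InnerProductSpace.toDual_symm_apply
  have hpB : p ∈ Metric.closedBall p R := Metric.mem_closedBall_self hdR.le
  have hfp : f p ∈ f '' Metric.closedBall p R := Set.mem_image_of_mem f hpB
  have hvpos : 0 < ‖v‖ := by
    rcases eq_or_ne v 0 with h | h
    · exfalso
      have : φ p = 0 := by rw [← hvx, h, inner_zero_left]
      have : φ (f p) < φ p := lt_trans (h1 _ hfp) h2
      have h0 : φ (f p) = 0 := by rw [← hvx, h, inner_zero_left]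
      linarith [h1 _ hfp, h2, ‹φ p = 0›, h0]
    · exact norm_pos_iff.mpr h
  set g := p + (R / ‖v‖) • v with hg
  have hgB : g ∈ Metric.closedBall p R := by
    rw [Metric.mem_closedBall, dist_eq_norm, hg, add_sub_cancel_left, norm_smul,
      Real.norm_eq_abs, abs_of_pos (div_pos hdR hvpos), div_mul_cancel₀ _ hvpos.ne']
  have hfg : f g ∈ f '' Metric.closedBall p R := Set.mem_image_of_mem f hgB
  have hvg : ⟪v, g⟫ = ⟪v, p⟫ + R * ‖v‖ := by
    rw [hg, inner_add_right, real_inner_smul_right, real_inner_self_eq_norm_sq]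
    ring_nf
    field_simp
  have hlt : R * ‖v‖ < ⟪v, g - f g⟫ := by
    rw [inner_sub_right, hvg]
    have h3 := lt_trans (h1 _ hfg) h2
    rw [← hvx (f g), ← hvx p] at h3
    linarith
  have hle : ⟪v, g - f g⟫ ≤ ‖v‖ * ‖g - f g‖ := real_inner_le_norm v _
  have hgd : ‖g - f g‖ ≤ (d : ℝ) := by
    rw [← norm_neg, neg_sub]
    exact hf g (hB hgB)
  have : R * ‖v‖ < (d : ℝ) * ‖v‖ := by
    calc R * ‖v‖ < ⟪v, g - f g⟫ := hlt
    _ ≤ ‖v‖ * ‖g - f g‖ := hle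
    _ ≤ ‖v‖ * d := by nlinarith
    _ = (d : ℝ) * ‖v‖ := mul_comm _ _
  have : R < (d : ℝ) := lt_of_mul_lt_mul_right this hvpos.le
  linarith
end

section
/- Carathéodory-type theorem for function values: let f : S → R for a finite set S ⊆ R^d, and suppose x = Σ_{i=1}^m λ_i p_i with p_i ∈ S, λ ∈ simplex, and Σ λ_i f(p_i) < c. Then there exist at most d+1 points q_1,...,q_{d+1} ∈ S and weights μ ∈ simplex with x = Σ μ_j q_j and Σ μ_j f(q_j) ≤ Σ λ_i f(p_i) < c. -/
private lemma carath_pad_sum {M : Type*} [AddCommMonoid M] {a b : ℕ} (h : a ≤ b)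
    (g : Fin a → M) :
    ∑ j : Fin b, (if h' : (j : ℕ) < a then g ⟨j, h'⟩ else 0) = ∑ i, g i := by
  set F : ℕ → M := fun j => if h' : j < a then g ⟨j, h'⟩ else 0 with hF
  calc ∑ j : Fin b, F (j : ℕ) = ∑ j ∈ Finset.range b, F j := Fin.sum_univ_eq_sum_range F b
    _ = ∑ j ∈ Finset.range a, F j := by
        refine (Finset.sum_subset (Finset.range_subset_range.2 h) ?_).symm
        intro x _ hx
        simp only [Finset.mem_range, not_lt] at hx
        exact dif_neg (by omega)
    _ = ∑ j : Fin a, F (j : ℕ) := (Fin.sum_univ_eq_sum_range F a).symm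
    _ = ∑ i, g i := by
        apply Finset.sum_congr rfl
        intro i _
        simp [hF, i.isLt]

private lemma carath_aux (d : ℕ) (f : EuclideanSpace ℝ (Fin d) → ℝ) :
    ∀ m (p : Fin m → EuclideanSpace ℝ (Fin d)) (l : Fin m → ℝ),
      (∀ i, 0 ≤ l i) → ∑ i, l i = 1 →
      ∃ (q : Fin (d + 1) → EuclideanSpace ℝ (Fin d)) (μ : Fin (d + 1) → ℝ),
        (∀ j, ∃ i, q j = p i) ∧ (∀ j, 0 ≤ μ j) ∧ (∑ j, μ j = 1) ∧
        (∑ j, μ j • q j = ∑ i, l i • p i) ∧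
        (∑ j, μ j * f (q j) ≤ ∑ i, l i * f (p i)) := by
  intro m
  induction m with
  | zero => intro p l hl hl1; simp at hl1
  | succ n IH =>
    intro p l hl hl1
    by_cases hn : n + 1 ≤ d + 1
    · -- pad with zeros
      refine ⟨fun j => if h' : (j : ℕ) < n + 1 then p ⟨j, h'⟩ else p 0,
              fun j => if h' : (j : ℕ) < n + 1 then l ⟨j, h'⟩ else 0, ?_, ?_, ?_, ?_, ?_⟩
      · intro j
        by_cases h' : (j : ℕ) < n + 1
        · exact ⟨⟨j, h'⟩, by simp [h']⟩
        · exact ⟨0, by simp [h']⟩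
      · intro j
        by_cases h' : (j : ℕ) < n + 1 <;> simp [h', hl]
      · rw [carath_pad_sum hn l, hl1]
      · rw [show (∑ j : Fin (d+1), (if h' : (j : ℕ) < n + 1 then l ⟨j, h'⟩ else 0) •
            (if h' : (j : ℕ) < n + 1 then p ⟨j, h'⟩ else p 0)) =
            ∑ j : Fin (d+1), (if h' : (j : ℕ) < n + 1 then l ⟨j, h'⟩ • p ⟨j, h'⟩ else 0) from
          Finset.sum_congr rfl fun j _ => by by_cases h' : (j : ℕ) < n + 1 <;> simp [h']]
        exact carath_pad_sum hn fun i => l i • p i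
      · rw [show (∑ j : Fin (d+1), (if h' : (j : ℕ) < n + 1 then l ⟨j, h'⟩ else 0) *
            f (if h' : (j : ℕ) < n + 1 then p ⟨j, h'⟩ else p 0)) =
            ∑ j : Fin (d+1), (if h' : (j : ℕ) < n + 1 then l ⟨j, h'⟩ * f (p ⟨j, h'⟩) else 0) from
          Finset.sum_congr rfl fun j _ => by by_cases h' : (j : ℕ) < n + 1 <;> simp [h']]
        exact le_of_eq (carath_pad_sum hn fun i => l i * f (p i))
    · -- too many points: find affine dependence and remove one
      push_neg at hn
      have hnotai : ¬ AffineIndependent ℝ p := by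
        intro hai
        have hcard := hai.card_le_finrank_succ
        have hle : Module.finrank ℝ (vectorSpan ℝ (Set.range p)) ≤
            Module.finrank ℝ (EuclideanSpace ℝ (Fin d)) := Submodule.finrank_le _
        rw [finrank_euclideanSpace_fin] at hle
        simp [Fintype.card_fin] at hcard
        omega
      rw [affineIndependent_iff] at hnotai
      push_neg at hnotai
      obtain ⟨s, w₀, hw0sum, hw0vec, e, hes, hw0e⟩ := hnotai
      -- extend w₀ by zero outside s
      set w₁ : Fin (n + 1) → ℝ := fun i => if i ∈ s then w₀ i else 0 with hw₁
      have hw1sum : ∑ i, w₁ i = 0 := by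
        rw [← hw0sum]; rw [Finset.sum_ite_mem]; simp
      have hw1vec : ∑ i, w₁ i • p i = 0 := by
        rw [← hw0vec]
        rw [show (∑ i, w₁ i • p i) = ∑ i, (if i ∈ s then w₀ i • p i else 0) from
          Finset.sum_congr rfl fun i _ => by by_cases h : i ∈ s <;> simp [hw₁, h]]
        rw [Finset.sum_ite_mem]; simp
      have hw1e : w₁ e ≠ 0 := by simp [hw₁, hes, hw0e]
      -- choose sign so that ∑ w * f(p) ≥ 0
      obtain ⟨w, hwsum, hwvec, hwe, hwf⟩ :
          ∃ w : Fin (n + 1) → ℝ, ∑ i, w i = 0 ∧ ∑ i, w i • p i = 0 ∧ w e ≠ 0 ∧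
            0 ≤ ∑ i, w i * f (p i) := by
        rcases le_or_gt 0 (∑ i, w₁ i * f (p i)) with h | h
        · exact ⟨w₁, hw1sum, hw1vec, hw1e, h⟩
        · refine ⟨-w₁, by simp [hw1sum], by simp [hw1vec], by simp [hw1e], ?_⟩
          simp only [Pi.neg_apply, neg_mul]
          rw [Finset.sum_neg_distrib]
          linarith
      -- find a positive entry
      have hpos : ∃ i, 0 < w i := by
        by_contra hc
        push_neg at hc
        rcases lt_or_gt_of_ne hwe with h | h
        · have hlt : ∑ i, w i < ∑ _i : Fin (n + 1), (0 : ℝ) :=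
            Finset.sum_lt_sum (fun i _ => hc i) ⟨e, Finset.mem_univ e, h⟩
          rw [hwsum, Finset.sum_const, smul_zero] at hlt
          exact lt_irrefl 0 hlt
        · exact absurd h (not_lt.2 (hc e))
      obtain ⟨i₁, hi₁⟩ := hpos
      -- minimize l i / w i over positive entries
      obtain ⟨i₀, hi₀mem, hi₀min⟩ :=
        Finset.exists_min_image (Finset.univ.filter fun i => 0 < w i) (fun i => l i / w i)
          ⟨i₁, Finset.mem_filter.2 ⟨Finset.mem_univ _, hi₁⟩⟩
      have hwi₀ : 0 < w i₀ := (Finset.mem_filter.1 hi₀mem).2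
      set t : ℝ := l i₀ / w i₀ with ht
      have ht0 : 0 ≤ t := div_nonneg (hl i₀) hwi₀.le
      set l' : Fin (n + 1) → ℝ := fun i => l i - t * w i with hl'
      have hl'0 : ∀ i, 0 ≤ l' i := by
        intro i
        rcases le_or_gt (w i) 0 with h | h
        · have : t * w i ≤ 0 := mul_nonpos_of_nonneg_of_nonpos ht0 h
          simp only [hl']; linarith [hl i]
        · have := hi₀min i (Finset.mem_filter.2 ⟨Finset.mem_univ _, h⟩)
          rw [ht, div_le_div_iff₀ hwi₀ h] at this
          have h2 : t * w i ≤ l i := by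
            rw [ht, div_mul_eq_mul_div, div_le_iff₀ hwi₀]; linarith
          simp only [hl']; linarith
      have hl'i₀ : l' i₀ = 0 := by
        simp [hl', ht, div_mul_cancel₀ _ (ne_of_gt hwi₀)]
      have hl'sum : ∑ i, l' i = 1 := by
        simp only [hl', Finset.sum_sub_distrib, ← Finset.mul_sum, hwsum, hl1, mul_zero, sub_zero]
      have hl'vec : ∑ i, l' i • p i = ∑ i, l i • p i := by
        simp only [hl', sub_smul, Finset.sum_sub_distrib, mul_smul, ← Finset.smul_sum, hwvec,
          smul_zero, sub_zero]
      have hl'f : ∑ i, l' i * f (p i) ≤ ∑ i, l i * f (p i) := by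
        simp only [hl', sub_mul, Finset.sum_sub_distrib, mul_assoc, ← Finset.mul_sum]
        nlinarith
      -- remove index i₀
      obtain ⟨q, μ, hq, hμ0, hμ1, hμvec, hμf⟩ :=
        IH (p ∘ i₀.succAbove) (l' ∘ i₀.succAbove) (fun i => hl'0 _) (by
          have h := Fin.sum_univ_succAbove l' i₀
          rw [hl'i₀, zero_add] at h
          simp only [Function.comp_apply]
          rw [← h, hl'sum])
      refine ⟨q, μ, fun j => (hq j).elim fun i h => ⟨i₀.succAbove i, h⟩, hμ0, hμ1, ?_, ?_⟩
      · rw [hμvec, ← hl'vec, Fin.sum_univ_succAbove (fun i => l' i • p i) i₀, hl'i₀]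
        simp
      · refine hμf.trans (le_trans ?_ hl'f)
        rw [Fin.sum_univ_succAbove (fun i => l' i * f (p i)) i₀, hl'i₀]
        simp

theorem caratheodory_function_values (d m : ℕ)
    (S : Set (EuclideanSpace ℝ (Fin d))) (hS : S.Finite)
    (f : EuclideanSpace ℝ (Fin d) → ℝ)
    (x : EuclideanSpace ℝ (Fin d))
    (p : Fin m → EuclideanSpace ℝ (Fin d)) (hp : ∀ i, p i ∈ S)
    (l : Fin m → ℝ) (hl : ∀ i, 0 ≤ l i) (hl1 : ∑ i, l i = 1)
    (hx : ∑ i, l i • p i = x)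
    (c : ℝ) (hval : ∑ i, l i * f (p i) < c) :
    ∃ (q : Fin (d + 1) → EuclideanSpace ℝ (Fin d)) (μ : Fin (d + 1) → ℝ),
      (∀ j, q j ∈ S) ∧ (∀ j, 0 ≤ μ j) ∧ (∑ j, μ j = 1) ∧
      (∑ j, μ j • q j = x) ∧
      (∑ j, μ j * f (q j) ≤ ∑ i, l i * f (p i)) ∧
      (∑ j, μ j * f (q j) < c) := by
  obtain ⟨q, μ, hq, hμ0, hμ1, hμvec, hμf⟩ := carath_aux d f m p l hl hl1
  exact ⟨q, μ, fun j => (hq j).elim fun i h => h ▸ hp i, hμ0, hμ1, hμvec.trans hx, hμf,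
    lt_of_le_of_lt hμf hval⟩
end
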